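/- Under the hypotheses of the previous statement (case M = 0: Q_n = P_n + Σ_{i=1}^N r_{i,n} P_{n-i}, both (P_n) and (Q_n) monic orthogonal, r_{N,N} ≠ 0), one has r_{N,n} ≠ 0 for every n ≥ N. -/

import Mathlib

open Polynomial

theorem ortho_low (u : Polynomial ℂ →ₗ[ℂ] ℂ) (P : ℕ → Polynomial ℂ)
    (hmon : ∀ n, (P n).Monic) (hdeg : ∀ n, (P n).degree = n)
    (horth : ∀ m n, m ≠ n → u (P m * P n) = 0) (d : ℕ) :
    ∀ (q : Polynomial ℂ) (n : ℕ), q.natDegree ≤ d → q.degree < n → u (P n * q) = 0 := by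
  induction d using Nat.strong_induction_on with
  | _ d ih =>
    intro q n hqd hqn
    rcases eq_or_ne q 0 with rfl | hq0
    · simp
    set m := q.natDegree with hm
    have hmn : m < n := by
      have h := (Polynomial.degree_eq_natDegree hq0) ▸ hqn
      exact_mod_cast h
    have hlc : q.leadingCoeff ≠ 0 := leadingCoeff_ne_zero.mpr hq0
    set q' := q - q.leadingCoeff • P m with hq'
    have hdq' : q'.degree < q.degree := by
      apply Polynomial.degree_sub_lt _ hq0
      · simp [smul_eq_C_mul, leadingCoeff_mul, leadingCoeff_C, (hmon m).leadingCoeff]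
      · simp [smul_eq_C_mul, degree_mul, degree_C hlc, hdeg m, Polynomial.degree_eq_natDegree hq0]; rfl
    have hkey : q = q.leadingCoeff • P m + q' := by rw [hq']; ring
    have h1 : u (P n * (q.leadingCoeff • P m)) = 0 := by
      rw [mul_smul_comm, map_smul, horth n m (Nat.ne_of_gt hmn), smul_zero]
    rcases eq_or_ne q' 0 with h0 | h0
    · rw [hkey, h0, add_zero]; exact h1
    · have hq'n : q'.natDegree < m := by
        have := hdq'.trans_le (degree_le_natDegree)
        exact natDegree_lt_natDegree h0 ((Polynomial.degree_eq_natDegree hq0) ▸ hdq')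
      have : u (P n * q') = 0 :=
        ih q'.natDegree (lt_of_lt_of_le hq'n hqd) q' n le_rfl
          (hdq'.trans hqn)
      rw [hkey, mul_add, map_add, h1, zero_add]
      exact this

theorem eq_zero_of_ortho (v : Polynomial ℂ →ₗ[ℂ] ℂ) (Q : ℕ → Polynomial ℂ)
    (hmon : ∀ n, (Q n).Monic) (hdeg : ∀ n, (Q n).degree = n)
    (horth : ∀ m n, m ≠ n → v (Q m * Q n) = 0) (hreg : ∀ n, v (Q n ^ 2) ≠ 0)
    (n : ℕ) (f : Polynomial ℂ) (hf : f.degree < n)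
    (h : ∀ j, j < n → v (f * Q j) = 0) : f = 0 := by
  by_contra hf0
  set m := f.natDegree with hm
  have hmn : m < n := by
    have h := (Polynomial.degree_eq_natDegree hf0) ▸ hf
    exact_mod_cast h
  have hlc : f.leadingCoeff ≠ 0 := leadingCoeff_ne_zero.mpr hf0
  have hdq' : (f - f.leadingCoeff • Q m).degree < (m : ℕ) := by
    have := Polynomial.degree_sub_lt (p := f) (q := f.leadingCoeff • Q m) ?_ hf0 ?_
    · rw [Polynomial.degree_eq_natDegree hf0] at this; exact_mod_cast this
    · simp [smul_eq_C_mul, degree_mul, degree_C hlc, hdeg m, Polynomial.degree_eq_natDegree hf0]; rfl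
    · simp [smul_eq_C_mul, leadingCoeff_mul, leadingCoeff_C, (hmon m).leadingCoeff]
  have h2 : v (Q m * (f - f.leadingCoeff • Q m)) = 0 :=
    ortho_low v Q hmon hdeg horth _ _ m le_rfl hdq'
  have hdecomp : f * Q m = Q m * (f - f.leadingCoeff • Q m) + f.leadingCoeff • (Q m ^ 2) := by
    simp only [smul_eq_C_mul]; ring
  have := h m hmn
  rw [hdecomp, map_add, h2, zero_add, map_smul, smul_eq_mul] at this
  exact hlc (by simpa [hreg m] using mul_eq_zero.mp this)

theorem recQ (v : Polynomial ℂ →ₗ[ℂ] ℂ) (Q : ℕ → Polynomial ℂ)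
    (hmon : ∀ n, (Q n).Monic) (hdeg : ∀ n, (Q n).degree = n)
    (horth : ∀ m n, m ≠ n → v (Q m * Q n) = 0) (hreg : ∀ n, v (Q n ^ 2) ≠ 0)
    (n : ℕ) (hn : 1 ≤ n) :
    ∃ b : ℂ, X * Q n = Q (n + 1) + b • Q n
      + (v (Q n ^ 2) / v (Q (n - 1) ^ 2)) • Q (n - 1) := by
  set b : ℂ := v (X * Q n * Q n) / v (Q n ^ 2) with hb
  set c : ℂ := v (Q n ^ 2) / v (Q (n - 1) ^ 2) with hc
  refine ⟨b, ?_⟩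
  set g : Polynomial ℂ := X * Q n - Q (n + 1) - b • Q n - c • Q (n - 1) with hg
  have hXQmon : (X * Q n).Monic := monic_X.mul (hmon n)
  have hXQdeg : (X * Q n).degree = ((n + 1 : ℕ) : WithBot ℕ) := by
    rw [degree_mul, degree_X, hdeg]
    exact_mod_cast (by omega : 1 + n = n + 1)
  have hgdeg : g.degree < ((n + 1 : ℕ) : WithBot ℕ) := by
    have h1 : (X * Q n - Q (n + 1)).degree < ((n + 1 : ℕ) : WithBot ℕ) := by
      have := Polynomial.degree_sub_lt (p := X * Q n) (q := Q (n + 1))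
        (by rw [hXQdeg, hdeg]) (hXQmon.ne_zero)
        (by rw [hXQmon.leadingCoeff, (hmon (n+1)).leadingCoeff])
      rwa [hXQdeg] at this
    have h2 : (b • Q n).degree < ((n + 1 : ℕ) : WithBot ℕ) :=
      lt_of_le_of_lt (degree_smul_le _ _) (by rw [hdeg]; exact_mod_cast Nat.lt_succ_self n)
    have h3 : (c • Q (n - 1)).degree < ((n + 1 : ℕ) : WithBot ℕ) :=
      lt_of_le_of_lt (degree_smul_le _ _)
        (by rw [hdeg]; exact_mod_cast Nat.lt_succ_of_le (Nat.sub_le n 1))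
    calc g.degree ≤ max (X * Q n - Q (n + 1) - b • Q n).degree (c • Q (n - 1)).degree :=
          degree_sub_le _ _
      _ ≤ max (max (X * Q n - Q (n + 1)).degree (b • Q n).degree) (c • Q (n - 1)).degree :=
          max_le_max (degree_sub_le _ _) le_rfl
      _ < _ := by simp only [max_lt_iff]; exact ⟨⟨h1, h2⟩, h3⟩
  have key : ∀ j, j < n + 1 → v (g * Q j) = 0 := by
    intro j hj
    have e : v (g * Q j) = v (Q j * (X * Q n)) - v (Q (n+1) * Q j)
        - b * v (Q n * Q j) - c * v (Q (n-1) * Q j) := by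
      rw [hg, show (X * Q n - Q (n + 1) - b • Q n - c • Q (n - 1)) * Q j
        = Q j * (X * Q n) - Q (n+1) * Q j - b • (Q n * Q j) - c • (Q (n-1) * Q j) by
          simp only [smul_eq_C_mul]; ring]
      simp only [map_sub, map_smul, smul_eq_mul]
    rcases eq_or_ne j n with rfl | hne1
    · have hbmul : b * v (Q j ^ 2) = v (X * Q j * Q j) := div_mul_cancel₀ _ (hreg j)
      rw [e, horth (j+1) j (by omega), horth (j-1) j (by omega),
        show Q j * (X * Q j) = X * Q j * Q j by ring,
        show Q j * Q j = Q j ^ 2 by ring, ← hbmul]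
      ring
    rcases eq_or_ne j (n - 1) with rfl | hne2
    · have hXQ : v (Q (n-1) * (X * Q n)) = v (Q n ^ 2) := by
        have hXm : (X * Q (n-1)).Monic := monic_X.mul (hmon _)
        have hXd : (X * Q (n-1)).degree = ((n : ℕ) : WithBot ℕ) := by
          rw [degree_mul, degree_X, hdeg]
          exact_mod_cast (by omega : 1 + (n - 1) = n)
        have hs : (X * Q (n-1) - Q n).degree < ((n : ℕ) : WithBot ℕ) := by
          have := Polynomial.degree_sub_lt (p := X * Q (n-1)) (q := Q n)
            (by rw [hXd, hdeg]) hXm.ne_zero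
            (by rw [hXm.leadingCoeff, (hmon n).leadingCoeff])
          rwa [hXd] at this
        have h0 : v (Q n * (X * Q (n-1) - Q n)) = 0 :=
          ortho_low v Q hmon hdeg horth _ _ n le_rfl hs
        rw [show Q (n-1) * (X * Q n) = Q n * (X * Q (n-1) - Q n) + Q n ^ 2 by ring,
          map_add, h0, zero_add]
      have hcv : c * v (Q (n-1) ^ 2) = v (Q n ^ 2) := div_mul_cancel₀ _ (hreg (n-1))
      rw [e, horth (n+1) (n-1) (by omega), horth n (n-1) (by omega), hXQ,
        show Q (n-1) * Q (n-1) = Q (n-1) ^ 2 by ring, hcv]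
      ring
    · have hjn : j < n - 1 := by omega
      have h1 : v (Q j * (X * Q n)) = 0 := by
        rw [show Q j * (X * Q n) = Q n * (X * Q j) by ring]
        refine ortho_low v Q hmon hdeg horth (j+1) _ n ?_ ?_
        · exact (natDegree_le_iff_degree_le).mpr (by
            rw [degree_mul, degree_X, hdeg]
            exact_mod_cast (by omega : 1 + j ≤ j + 1))
        · rw [degree_mul, degree_X, hdeg]
          exact_mod_cast (by omega : 1 + j < n)
      rw [e, h1, horth (n+1) j (by omega), horth n j (by omega), horth (n-1) j (by omega)]
      ring
  have hg0 : g = 0 := eq_zero_of_ortho v Q hmon hdeg horth hreg (n+1) g hgdeg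
    (by exact_mod_cast key)
  rw [hg, sub_sub, sub_sub, sub_eq_zero] at hg0
  rw [hg0]; ring

/-- Theorem 2.4 (b) (case M = 0): `r_{N,N} ≠ 0` implies `r_{N,n} ≠ 0` for all `n ≥ N`. -/
theorem case_M_zero_rN_ne_zero
    (N : ℕ) (hN : 1 ≤ N)
    (u v : Polynomial ℂ →ₗ[ℂ] ℂ)
    (P Q : ℕ → Polynomial ℂ) (r : ℕ → ℕ → ℂ)
    (hPmonic : ∀ n, (P n).Monic) (hPdeg : ∀ n, (P n).degree = n)
    (hPorth : ∀ m n, m ≠ n → u (P m * P n) = 0) (hPreg : ∀ n, u (P n ^ 2) ≠ 0)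
    (hQmonic : ∀ n, (Q n).Monic) (hQdeg : ∀ n, (Q n).degree = n)
    (hQorth : ∀ m n, m ≠ n → v (Q m * Q n) = 0) (hQreg : ∀ n, v (Q n ^ 2) ≠ 0)
    (hu1 : u 1 = 1) (hv1 : v 1 = 1)
    (hrz : ∀ i n, n < i → r i n = 0) (hrNN : r N N ≠ 0)
    (hQdef : ∀ n, Q n = P n + ∑ i ∈ Finset.Icc 1 N, r i n • P (n - i)) :
    ∀ n, N ≤ n → r N n ≠ 0 := by
  -- orthogonality of Q m against low-degree polynomials w.r.t. u
  have O_QP : ∀ (m : ℕ) (s : Polynomial ℂ),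
      s.degree < ((m - N : ℕ) : WithBot ℕ) → u (Q m * s) = 0 := by
    intro m s hs
    rw [hQdef m, add_mul, Finset.sum_mul, map_add, map_sum]
    have h1 : u (P m * s) = 0 := by
      refine ortho_low u P hPmonic hPdeg hPorth s.natDegree s m le_rfl ?_
      exact lt_of_lt_of_le hs (Nat.cast_le.mpr (Nat.sub_le m N))
    rw [h1, zero_add]
    refine Finset.sum_eq_zero fun i hi => ?_
    obtain ⟨hi1, hi2⟩ := Finset.mem_Icc.mp hi
    rw [smul_mul_assoc, map_smul]
    have h2 : u (P (m - i) * s) = 0 := by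
      refine ortho_low u P hPmonic hPdeg hPorth s.natDegree s (m - i) le_rfl ?_
      exact lt_of_lt_of_le hs (Nat.cast_le.mpr (by omega))
    rw [h2, smul_zero]
  -- the key formula
  have A : ∀ m, N ≤ m → u (Q m * P (m - N)) = r N m * u (P (m - N) ^ 2) := by
    intro m hm
    rw [hQdef m, add_mul, Finset.sum_mul, map_add, map_sum]
    rw [hPorth m (m - N) (by omega), zero_add]
    rw [Finset.sum_eq_single N]
    · rw [smul_mul_assoc, map_smul, smul_eq_mul, ← sq]
    · intro i hi hine
      obtain ⟨hi1, hi2⟩ := Finset.mem_Icc.mp hi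
      rw [smul_mul_assoc, map_smul, hPorth (m - i) (m - N) (by omega), smul_zero]
    · intro hNot
      exact absurd (Finset.mem_Icc.mpr ⟨hN, le_rfl⟩) hNot
  -- induction
  suffices H : ∀ k, r N (N + k) ≠ 0 by
    intro n hn
    have := H (n - N)
    rwa [Nat.add_sub_cancel' hn] at this
  intro k
  induction k with
  | zero => simpa using hrNN
  | succ k ih =>
    set n := N + k with hn
    have hNn : N ≤ n := by omega
    obtain ⟨b, hrec⟩ := recQ v Q hQmonic hQdeg hQorth hQreg (n + 1) (by omega)
    rw [Nat.add_sub_cancel] at hrec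
    set c : ℂ := v (Q (n + 1) ^ 2) / v (Q n ^ 2) with hc
    have hcne : c ≠ 0 := div_ne_zero (hQreg _) (hQreg _)
    -- step 1: replace P (n+1-N) by X * P (n-N)
    have hs : (X * P (n - N) - P (n + 1 - N)).degree < ((n + 1 - N : ℕ) : WithBot ℕ) := by
      have hXm : (X * P (n - N)).Monic := monic_X.mul (hPmonic _)
      have hXd : (X * P (n - N)).degree = ((n + 1 - N : ℕ) : WithBot ℕ) := by
        rw [degree_mul, degree_X, hPdeg]
        exact_mod_cast (by omega : 1 + (n - N) = n + 1 - N)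
      have := Polynomial.degree_sub_lt (p := X * P (n - N)) (q := P (n + 1 - N))
        (by rw [hXd, hPdeg]) hXm.ne_zero
        (by rw [hXm.leadingCoeff, (hPmonic _).leadingCoeff])
      rwa [hXd] at this
    have step1 : u (Q (n + 1) * P (n + 1 - N)) = u (Q (n + 1) * (X * P (n - N))) := by
      have h0 : u (Q (n + 1) * (X * P (n - N) - P (n + 1 - N))) = 0 := O_QP (n + 1) _ hs
      rw [mul_sub, map_sub, sub_eq_zero] at h0
      exact h0.symm
    -- step 2: use the recurrence
    have step2 : u (Q (n + 1) * (X * P (n - N))) = c * (r N n * u (P (n - N) ^ 2)) := by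
      rw [show Q (n + 1) * (X * P (n - N)) = (X * Q (n + 1)) * P (n - N) by ring, hrec]
      rw [add_mul, add_mul, smul_mul_assoc, smul_mul_assoc, map_add, map_add,
        map_smul, map_smul]
      have e1 : u (Q (n + 1 + 1) * P (n - N)) = 0 := by
        refine O_QP _ _ ?_
        rw [hPdeg]
        exact Nat.cast_lt.mpr (by omega)
      have e2 : u (Q (n + 1) * P (n - N)) = 0 := by
        refine O_QP _ _ ?_
        rw [hPdeg]
        exact Nat.cast_lt.mpr (by omega)
      rw [e1, e2, smul_zero, zero_add, zero_add, A n hNn, smul_eq_mul]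
    have final : r N (n + 1) * u (P (n + 1 - N) ^ 2) = c * (r N n * u (P (n - N) ^ 2)) := by
      rw [← A (n + 1) (by omega), step1, step2]
    intro hcontra
    have hzero : r N (n + 1) * u (P (n + 1 - N) ^ 2) = 0 := by
      rw [show N + (k + 1) = n + 1 by omega] at hcontra
      rw [hcontra, zero_mul]
    rw [final] at hzero
    rcases mul_eq_zero.mp hzero with h | h
    · exact hcne h
    rcases mul_eq_zero.mp h with h' | h'
    · exact ih h'
    · exact hPreg _ h'
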